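/- arXiv:2602.19236 — 3 statements merged into one kernel-verified Lean document; each statement's English description precedes it below -/
import Mathlib

section
/- Let C(Γ), C(Γ̃) be symmetric positive definite N×N matrices with λ_min ≥ 1 and operator norms at most c_* = 1 + b²c̆, and suppose ‖C(Γ) − C(Γ̃)‖ ≤ 2b c̆ ‖Γ − Γ̃‖. With C̃(·) = U^⊤ C(·) U for a fixed orthogonal U, and A(·) = C̃₁₂(·) C̃₂₂(·)^{-1} the corresponding block ratios, one has ‖A(Γ) − A(Γ̃)‖ ≤ (2 + b²c̆) · 2b c̆ · ‖Γ − Γ̃‖ = (4b c̆ + 2b³ c̆²) ‖Γ − Γ̃‖. -/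
open Matrix
open scoped Matrix.Norms.L2Operator

section Aux

variable {m n : Type*} [Fintype m] [Fintype n] [DecidableEq m] [DecidableEq n]

lemma aux_l2norm_le (A : Matrix m n ℝ) {c : ℝ} (hc : 0 ≤ c)
    (h : ∀ x : EuclideanSpace ℝ n, ‖(EuclideanSpace.equiv m ℝ).symm (A *ᵥ x)‖ ≤ c * ‖x‖) :
    ‖A‖ ≤ c := by
  rw [Matrix.l2_opNorm_def]
  exact ContinuousLinearMap.opNorm_le_bound _ hc fun x => h x

lemma aux_norm_one_le : ‖(1 : Matrix n n ℝ)‖ ≤ 1 := by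
  refine aux_l2norm_le _ zero_le_one fun x => ?_
  rw [Matrix.one_mulVec, one_mul]
  exact le_of_eq rfl

end Aux

section Aux2

variable {m n : Type*} [Fintype m] [Fintype n] [DecidableEq m] [DecidableEq n]

lemma aux_norm_mulVec_ge (X : Matrix n n ℝ) (hX : (X - 1).PosSemidef)
    (x : EuclideanSpace ℝ n) :
    ‖x‖ ≤ ‖(EuclideanSpace.equiv n ℝ).symm (X *ᵥ x)‖ := by
  set xf : n → ℝ := (EuclideanSpace.equiv n ℝ) x with hxf
  set y : EuclideanSpace ℝ n := (EuclideanSpace.equiv n ℝ).symm (X *ᵥ xf) with hy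
  have hdot : xf ⬝ᵥ xf ≤ xf ⬝ᵥ (X *ᵥ xf) := by
    have h := hX.dotProduct_mulVec_nonneg xf
    rw [star_trivial, Matrix.sub_mulVec, Matrix.one_mulVec, dotProduct_sub] at h
    linarith
  have hinner1 : (inner ℝ x x : ℝ) = xf ⬝ᵥ xf := by
    rw [EuclideanSpace.inner_eq_star_dotProduct, star_trivial]; rfl
  have hinner2 : (inner ℝ x y : ℝ) = xf ⬝ᵥ (X *ᵥ xf) := by
    rw [EuclideanSpace.inner_eq_star_dotProduct, star_trivial, dotProduct_comm]; rfl
  have h1 : ‖x‖ * ‖x‖ ≤ ‖x‖ * ‖y‖ := by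
    calc ‖x‖ * ‖x‖ = (inner ℝ x x : ℝ) := (real_inner_self_eq_norm_mul_norm x).symm
    _ ≤ (inner ℝ x y : ℝ) := by rw [hinner1, hinner2]; exact hdot
    _ ≤ ‖x‖ * ‖y‖ := real_inner_le_norm x y
  rcases eq_or_lt_of_le (norm_nonneg x) with h0 | h0
  · rw [← h0]; exact norm_nonneg y
  · exact le_of_mul_le_mul_left h1 h0

lemma aux_inv_norm_le_one (X : Matrix n n ℝ) (hpd : X.PosDef)
    (hX : (X - 1).PosSemidef) : ‖X⁻¹‖ ≤ 1 := by
  refine aux_l2norm_le _ zero_le_one fun y => ?_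
  have hXi : X * X⁻¹ = 1 := Matrix.mul_nonsing_inv _ (Matrix.isUnit_iff_isUnit_det _ |>.1 hpd.isUnit)
  have := aux_norm_mulVec_ge X hX ((EuclideanSpace.equiv n ℝ).symm (X⁻¹ *ᵥ y))
  rw [one_mul]
  refine this.trans (le_of_eq ?_)
  congr 1
  show (EuclideanSpace.equiv n ℝ).symm (X *ᵥ (X⁻¹ *ᵥ (y : n → ℝ))) = y
  rw [Matrix.mulVec_mulVec, hXi, Matrix.one_mulVec]
  rfl

end Aux2

section Aux3

variable {m n : Type*} [Fintype m] [Fintype n] [DecidableEq m] [DecidableEq n]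

lemma aux_ext_norm (x : EuclideanSpace ℝ n) :
    ‖(EuclideanSpace.equiv (m ⊕ n) ℝ).symm (Sum.elim (0 : m → ℝ) x)‖ = ‖x‖ := by
  rw [EuclideanSpace.norm_eq, EuclideanSpace.norm_eq]
  congr 1
  rw [Fintype.sum_sum_type]
  simp

lemma aux_norm_inr_part_le (v : EuclideanSpace ℝ (m ⊕ n)) :
    ‖((EuclideanSpace.equiv n ℝ).symm fun j => v (Sum.inr j))‖ ≤ ‖v‖ := by
  rw [EuclideanSpace.norm_eq, EuclideanSpace.norm_eq]
  apply Real.sqrt_le_sqrt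
  rw [Fintype.sum_sum_type]
  have h1 : ∀ (f : m ⊕ n → ℝ), (0:ℝ) ≤ ∑ i : m, ‖f (Sum.inl i)‖ ^ 2 :=
    fun f => Finset.sum_nonneg fun i _ => sq_nonneg _
  calc (∑ j : n, ‖((EuclideanSpace.equiv n ℝ).symm fun j => v (Sum.inr j)) j‖ ^ 2)
      = ∑ j : n, ‖v (Sum.inr j)‖ ^ 2 := rfl
    _ ≤ _ := le_add_of_nonneg_left (h1 v)

lemma aux_norm_inl_part_le (v : EuclideanSpace ℝ (m ⊕ n)) :
    ‖((EuclideanSpace.equiv m ℝ).symm fun i => v (Sum.inl i))‖ ≤ ‖v‖ := by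
  rw [EuclideanSpace.norm_eq, EuclideanSpace.norm_eq]
  apply Real.sqrt_le_sqrt
  rw [Fintype.sum_sum_type]
  have h1 : (0:ℝ) ≤ ∑ j : n, ‖v (Sum.inr j)‖ ^ 2 :=
    Finset.sum_nonneg fun j _ => sq_nonneg _
  calc (∑ i : m, ‖((EuclideanSpace.equiv m ℝ).symm fun i => v (Sum.inl i)) i‖ ^ 2)
      = ∑ i : m, ‖v (Sum.inl i)‖ ^ 2 := rfl
    _ ≤ _ := le_add_of_nonneg_right h1

lemma aux_norm_toBlocks₂₂_le (M : Matrix (m ⊕ n) (m ⊕ n) ℝ) : ‖M.toBlocks₂₂‖ ≤ ‖M‖ := by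
  refine aux_l2norm_le _ (norm_nonneg M) fun x => ?_
  set xh : EuclideanSpace ℝ (m ⊕ n) := (EuclideanSpace.equiv (m ⊕ n) ℝ).symm (Sum.elim 0 x)
    with hxh
  have hv : (fun j => ((EuclideanSpace.equiv (m ⊕ n) ℝ).symm (M *ᵥ xh)) (Sum.inr j))
      = M.toBlocks₂₂ *ᵥ (x : n → ℝ) := by
    funext j
    show (M *ᵥ Sum.elim (0 : m → ℝ) x) (Sum.inr j) = _
    simp [Matrix.mulVec, dotProduct, Fintype.sum_sum_type, Matrix.toBlocks₂₂]
  calc ‖(EuclideanSpace.equiv n ℝ).symm (M.toBlocks₂₂ *ᵥ x)‖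
      = ‖((EuclideanSpace.equiv n ℝ).symm
          fun j => ((EuclideanSpace.equiv (m ⊕ n) ℝ).symm (M *ᵥ xh)) (Sum.inr j))‖ := by
        rw [hv]
    _ ≤ ‖(EuclideanSpace.equiv (m ⊕ n) ℝ).symm (M *ᵥ xh)‖ := aux_norm_inr_part_le _
    _ ≤ ‖M‖ * ‖xh‖ := Matrix.l2_opNorm_mulVec M xh
    _ = ‖M‖ * ‖x‖ := by rw [hxh, aux_ext_norm]

lemma aux_norm_toBlocks₁₂_le (M : Matrix (m ⊕ n) (m ⊕ n) ℝ) : ‖M.toBlocks₁₂‖ ≤ ‖M‖ := by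
  refine aux_l2norm_le _ (norm_nonneg M) fun x => ?_
  set xh : EuclideanSpace ℝ (m ⊕ n) := (EuclideanSpace.equiv (m ⊕ n) ℝ).symm (Sum.elim 0 x)
    with hxh
  have hv : (fun i => ((EuclideanSpace.equiv (m ⊕ n) ℝ).symm (M *ᵥ xh)) (Sum.inl i))
      = M.toBlocks₁₂ *ᵥ (x : n → ℝ) := by
    funext i
    show (M *ᵥ Sum.elim (0 : m → ℝ) x) (Sum.inl i) = _
    simp [Matrix.mulVec, dotProduct, Fintype.sum_sum_type, Matrix.toBlocks₁₂]
  calc ‖(EuclideanSpace.equiv m ℝ).symm (M.toBlocks₁₂ *ᵥ x)‖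
      = ‖((EuclideanSpace.equiv m ℝ).symm
          fun i => ((EuclideanSpace.equiv (m ⊕ n) ℝ).symm (M *ᵥ xh)) (Sum.inl i))‖ := by
        rw [hv]
    _ ≤ ‖(EuclideanSpace.equiv (m ⊕ n) ℝ).symm (M *ᵥ xh)‖ := aux_norm_inl_part_le _
    _ ≤ ‖M‖ * ‖xh‖ := Matrix.l2_opNorm_mulVec M xh
    _ = ‖M‖ * ‖x‖ := by rw [hxh, aux_ext_norm]

end Aux3

/-- Perturbation bound for the block ratio `A(Γ) = C̃₁₂(Γ) C̃₂₂(Γ)⁻¹`, where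
`C̃(Γ) = Uᵀ C(Γ) U`: if `C(Γ)` and `C(Γ̃)` are positive definite with smallest eigenvalue
at least `1`, operator norms at most `1 + b² c̆`, and `‖C(Γ) - C(Γ̃)‖ ≤ 2 b c̆ ‖Γ - Γ̃‖`,
then `‖A(Γ) - A(Γ̃)‖ ≤ (4 b c̆ + 2 b³ c̆²) ‖Γ - Γ̃‖`. -/
theorem block_ratio_lipschitz (p r k : ℕ) (b c : ℝ) (hb : 0 < b) (hc : 0 < c)
    (CF : Matrix (Fin k) (Fin k) ℝ → Matrix (Fin p ⊕ Fin r) (Fin p ⊕ Fin r) ℝ)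
    (U : Matrix (Fin p ⊕ Fin r) (Fin p ⊕ Fin r) ℝ) (hU : Uᵀ * U = 1)
    (Γ Γt : Matrix (Fin k) (Fin k) ℝ)
    (hpdΓ : (CF Γ).PosDef) (hpdΓt : (CF Γt).PosDef)
    (hminΓ : (CF Γ - 1).PosSemidef) (hminΓt : (CF Γt - 1).PosSemidef)
    (hnΓ : ‖CF Γ‖ ≤ 1 + b ^ 2 * c) (hnΓt : ‖CF Γt‖ ≤ 1 + b ^ 2 * c)
    (hlip : ‖CF Γ - CF Γt‖ ≤ 2 * b * c * ‖Γ - Γt‖) :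
    ‖(Uᵀ * CF Γ * U).toBlocks₁₂ * ((Uᵀ * CF Γ * U).toBlocks₂₂)⁻¹ -
        (Uᵀ * CF Γt * U).toBlocks₁₂ * ((Uᵀ * CF Γt * U).toBlocks₂₂)⁻¹‖ ≤
      (4 * b * c + 2 * b ^ 3 * c ^ 2) * ‖Γ - Γt‖ := by
  have hUt : Uᴴ = Uᵀ := Matrix.conjTranspose_eq_transpose_of_trivial U
  -- norm of U and Uᵀ
  have hUn : ‖U‖ ≤ 1 := by
    have h2 : ‖Uᴴ * U‖ = ‖U‖ * ‖U‖ := Matrix.l2_opNorm_conjTranspose_mul_self U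
    rw [hUt, hU] at h2
    nlinarith [norm_nonneg U, aux_norm_one_le (n := Fin p ⊕ Fin r)]
  have hUtn : ‖Uᵀ‖ ≤ 1 := by
    rw [← hUt, Matrix.l2_opNorm_conjTranspose]; exact hUn
  have key : ∀ A : Matrix (Fin p ⊕ Fin r) (Fin p ⊕ Fin r) ℝ, ‖Uᵀ * A * U‖ ≤ ‖A‖ := by
    intro A
    have h1 : ‖Uᵀ * A * U‖ ≤ ‖Uᵀ * A‖ * ‖U‖ := Matrix.l2_opNorm_mul _ _
    have h2 : ‖Uᵀ * A‖ ≤ ‖Uᵀ‖ * ‖A‖ := Matrix.l2_opNorm_mul _ _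
    nlinarith [norm_nonneg A, norm_nonneg U, norm_nonneg Uᵀ, norm_nonneg (Uᵀ * A)]
  set D := Uᵀ * CF Γ * U with hD
  set Dt := Uᵀ * CF Γt * U with hDt
  set B := D.toBlocks₁₂ with hB
  set Bt := Dt.toBlocks₁₂ with hBt'
  set X := D.toBlocks₂₂ with hX
  set Xt := Dt.toBlocks₂₂ with hXt'
  -- positive semidefiniteness of the shifted blocks
  have hshift : ∀ M : Matrix (Fin p ⊕ Fin r) (Fin p ⊕ Fin r) ℝ, (M - 1).PosSemidef →
      ((Uᵀ * M * U).toBlocks₂₂ - 1).PosSemidef := by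
    intro M hM
    have hD1 : Uᵀ * M * U - 1 = Uᵀ * (M - 1) * U := by
      rw [Matrix.mul_sub, Matrix.sub_mul, Matrix.mul_one, hU]
    have hDpsd : (Uᵀ * M * U - 1).PosSemidef := by
      rw [hD1, ← hUt]; exact hM.conjTranspose_mul_mul_same U
    have hX1 : (Uᵀ * M * U).toBlocks₂₂ - 1 = (Uᵀ * M * U - 1).toBlocks₂₂ := by
      ext i j
      simp [Matrix.toBlocks₂₂, Matrix.one_apply, Matrix.sub_apply]
    rw [hX1]
    exact hDpsd.submatrix Sum.inr
  have hX1psd : (X - 1).PosSemidef := hshift _ hminΓ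
  have hXt1psd : (Xt - 1).PosSemidef := hshift _ hminΓt
  have hone : ∀ Y : Matrix (Fin r) (Fin r) ℝ, (Y - 1).PosSemidef → Y.PosDef := by
    intro Y hY
    have h := (Matrix.PosDef.one (n := Fin r) (R := ℝ)).add_posSemidef hY
    have he : (1 : Matrix (Fin r) (Fin r) ℝ) + (Y - 1) = Y := by abel
    rwa [he] at h
  have hXpd : X.PosDef := hone _ hX1psd
  have hXtpd : Xt.PosDef := hone _ hXt1psd
  -- inverses
  have hXi' : X⁻¹ * X = 1 :=
    Matrix.nonsing_inv_mul _ ((Matrix.isUnit_iff_isUnit_det _).1 hXpd.isUnit)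
  have hXti : Xt * Xt⁻¹ = 1 :=
    Matrix.mul_nonsing_inv _ ((Matrix.isUnit_iff_isUnit_det _).1 hXtpd.isUnit)
  have hXinv : ‖X⁻¹‖ ≤ 1 := aux_inv_norm_le_one X hXpd hX1psd
  have hXtinv : ‖Xt⁻¹‖ ≤ 1 := aux_inv_norm_le_one Xt hXtpd hXt1psd
  -- norm bounds on blocks
  have hBtn : ‖Bt‖ ≤ 1 + b ^ 2 * c :=
    (aux_norm_toBlocks₁₂_le _).trans ((key _).trans hnΓt)
  have hdiff : ‖D - Dt‖ ≤ 2 * b * c * ‖Γ - Γt‖ := by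
    have h : D - Dt = Uᵀ * (CF Γ - CF Γt) * U := by
      rw [hD, hDt, Matrix.mul_sub, Matrix.sub_mul]
    rw [h]; exact (key _).trans hlip
  have hBd : ‖B - Bt‖ ≤ 2 * b * c * ‖Γ - Γt‖ := by
    have hsub : B - Bt = (D - Dt).toBlocks₁₂ := by
      ext i j; simp [hB, hBt', Matrix.toBlocks₁₂, Matrix.sub_apply]
    rw [hsub]; exact (aux_norm_toBlocks₁₂_le _).trans hdiff
  have hXd : ‖Xt - X‖ ≤ 2 * b * c * ‖Γ - Γt‖ := by
    have hsub : Xt - X = (Dt - D).toBlocks₂₂ := by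
      ext i j; simp [hX, hXt', Matrix.toBlocks₂₂, Matrix.sub_apply]
    rw [hsub]
    refine (aux_norm_toBlocks₂₂_le _).trans ?_
    rw [norm_sub_rev]; exact hdiff
  -- resolvent identity and splitting
  have hres : X⁻¹ * (Xt - X) * Xt⁻¹ = X⁻¹ - Xt⁻¹ := by
    rw [Matrix.mul_sub, Matrix.sub_mul, Matrix.mul_assoc, hXti, Matrix.mul_one, hXi',
      Matrix.one_mul]
  have hsplit : B * X⁻¹ - Bt * Xt⁻¹
      = (B - Bt) * X⁻¹ + Bt * (X⁻¹ * (Xt - X) * Xt⁻¹) := by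
    rw [hres, Matrix.sub_mul, Matrix.mul_sub]; abel
  -- norm chain
  have h1 : ‖(B - Bt) * X⁻¹‖ ≤ ‖B - Bt‖ * ‖X⁻¹‖ := Matrix.l2_opNorm_mul _ _
  have h2 : ‖X⁻¹ * (Xt - X) * Xt⁻¹‖ ≤ ‖X⁻¹‖ * ‖Xt - X‖ * ‖Xt⁻¹‖ := by
    calc ‖X⁻¹ * (Xt - X) * Xt⁻¹‖ ≤ ‖X⁻¹ * (Xt - X)‖ * ‖Xt⁻¹‖ := Matrix.l2_opNorm_mul _ _
      _ ≤ ‖X⁻¹‖ * ‖Xt - X‖ * ‖Xt⁻¹‖ :=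
        mul_le_mul_of_nonneg_right (Matrix.l2_opNorm_mul _ _) (norm_nonneg _)
  have h3 : ‖Bt * (X⁻¹ * (Xt - X) * Xt⁻¹)‖ ≤ ‖Bt‖ * (‖X⁻¹‖ * ‖Xt - X‖ * ‖Xt⁻¹‖) :=
    (Matrix.l2_opNorm_mul _ _).trans (mul_le_mul_of_nonneg_left h2 (norm_nonneg _))
  have htot : ‖B * X⁻¹ - Bt * Xt⁻¹‖
      ≤ ‖B - Bt‖ * ‖X⁻¹‖ + ‖Bt‖ * (‖X⁻¹‖ * ‖Xt - X‖ * ‖Xt⁻¹‖) := by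
    rw [hsplit]
    exact (norm_add_le _ _).trans (add_le_add h1 h3)
  refine htot.trans ?_
  have hδ : (0:ℝ) ≤ ‖Γ - Γt‖ := norm_nonneg _
  have hs : (0:ℝ) ≤ 2 * b * c * ‖Γ - Γt‖ := by positivity
  have t1 : ‖B - Bt‖ * ‖X⁻¹‖ ≤ (2 * b * c * ‖Γ - Γt‖) * 1 :=
    mul_le_mul hBd hXinv (norm_nonneg _) hs
  have t2a : ‖X⁻¹‖ * ‖Xt - X‖ ≤ 1 * (2 * b * c * ‖Γ - Γt‖) :=
    mul_le_mul hXinv hXd (norm_nonneg _) zero_le_one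
  have t2b : ‖X⁻¹‖ * ‖Xt - X‖ * ‖Xt⁻¹‖ ≤ (1 * (2 * b * c * ‖Γ - Γt‖)) * 1 :=
    mul_le_mul t2a hXtinv (norm_nonneg _) (by positivity)
  have t2 : ‖Bt‖ * (‖X⁻¹‖ * ‖Xt - X‖ * ‖Xt⁻¹‖)
      ≤ (1 + b ^ 2 * c) * ((1 * (2 * b * c * ‖Γ - Γt‖)) * 1) :=
    mul_le_mul hBtn t2b (mul_nonneg (mul_nonneg (norm_nonneg _) (norm_nonneg _))
      (norm_nonneg _)) (by positivity)
  calc ‖B - Bt‖ * ‖X⁻¹‖ + ‖Bt‖ * (‖X⁻¹‖ * ‖Xt - X‖ * ‖Xt⁻¹‖)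
      ≤ (2 * b * c * ‖Γ - Γt‖) * 1
        + (1 + b ^ 2 * c) * ((1 * (2 * b * c * ‖Γ - Γt‖)) * 1) := add_le_add t1 t2
    _ = (4 * b * c + 2 * b ^ 3 * c ^ 2) * ‖Γ - Γt‖ := by ring
end

section
/- Under the setup of the previous statement, ‖(Xδ²ΛX^⊤ + C)^{-1}Xβ⁰‖² ≤ (1 + ‖C̃₁₂C̃₂₂^{-1}‖²) · β⁰ᵀ V D F^{-2} D V^⊤ β⁰, and β⁰ᵀ V D F^{-2} D V^⊤ β⁰ ≤ (λ_max(D)² / λ_min(D̃)²) ‖β⁰‖² = κ(X)⁴ ‖β⁰‖² when δ²Λ = δ² I (up to the bound λ_max(D̃) ≤ a^{-1}δ²s_max(X)², λ_min(D̃) ≥ aδ²s_min(X)²). -/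
open Matrix
open scoped Matrix.Norms.L2Operator

private lemma conjT_eq {m n : Type*} (A : Matrix m n ℝ) : Aᴴ = Aᵀ := by
  ext i j; simp [Matrix.conjTranspose_apply]

private lemma mulVec_inj {n : Type*} [Fintype n] [DecidableEq n] {A A' : Matrix n n ℝ} (h : A' * A = 1) :
    Function.Injective A.mulVec := by
  intro x y hxy
  have h2 : A' *ᵥ (A *ᵥ x) = A' *ᵥ (A *ᵥ y) := congrArg A'.mulVec hxy
  simpa [Matrix.mulVec_mulVec, h] using h2

private lemma posDef_conj {m n : Type*} [Fintype m] [Fintype n] [DecidableEq m] [DecidableEq n] {A : Matrix n n ℝ}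
    (hA : A.PosDef) (B : Matrix n m ℝ)
    (hB : Function.Injective B.mulVec) : (Bᵀ * A * B).PosDef := by
  refine Matrix.PosDef.of_dotProduct_mulVec_pos ?_ fun x hx => ?_
  · have h1 := Matrix.isHermitian_conjTranspose_mul_mul B hA.isHermitian
    rwa [conjT_eq] at h1
  · have hBx : B *ᵥ x ≠ 0 := fun h => hx (hB (by simpa using h))
    have h2 := hA.dotProduct_mulVec_pos hBx
    simp only [star_trivial] at h2 ⊢
    rwa [← Matrix.mulVec_mulVec, ← Matrix.mulVec_mulVec, Matrix.dotProduct_mulVec,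
      Matrix.vecMul_transpose]

private lemma sum_sq_mulVec_le {m n : Type*} [Fintype m] [Fintype n] [DecidableEq m] [DecidableEq n]
    (A : Matrix m n ℝ) (x : n → ℝ) :
    ∑ i, (A.mulVec x i) ^ 2 ≤ ‖A‖ ^ 2 * ∑ i, x i ^ 2 := by
  have h := A.l2_opNorm_mulVec ((WithLp.equiv 2 (n → ℝ)).symm x)
  have hx : ‖(WithLp.equiv 2 (n → ℝ)).symm x‖ ^ 2 = ∑ i, x i ^ 2 := by
    rw [EuclideanSpace.norm_eq, Real.sq_sqrt (by positivity)]
    simp [sq_abs]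
  have hy : ‖(EuclideanSpace.equiv m ℝ).symm (A *ᵥ ((WithLp.equiv 2 (n → ℝ)).symm x))‖ ^ 2
      = ∑ i, (A.mulVec x i) ^ 2 := by
    rw [EuclideanSpace.norm_eq, Real.sq_sqrt (by positivity)]
    apply Finset.sum_congr rfl
    intro i _
    rw [Real.norm_eq_abs, sq_abs]
    rfl
  calc ∑ i, (A.mulVec x i) ^ 2 = _ := hy.symm
    _ ≤ (‖A‖ * ‖(WithLp.equiv 2 (n → ℝ)).symm x‖) ^ 2 := by
        exact pow_le_pow_left₀ (norm_nonneg _) h 2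
    _ = ‖A‖ ^ 2 * ∑ i, x i ^ 2 := by rw [mul_pow, hx]

private lemma sum_sq_mulVec_orth {n : Type*} [Fintype n] [DecidableEq n] {U : Matrix n n ℝ}
    (hU : Uᵀ * U = 1) (v : n → ℝ) :
    ∑ i, (U.mulVec v i) ^ 2 = ∑ i, v i ^ 2 := by
  have h1 : ∀ w : n → ℝ, ∑ i, w i ^ 2 = w ⬝ᵥ w := by intro w; simp [dotProduct, sq]
  rw [h1, h1, Matrix.dotProduct_mulVec, ← Matrix.mulVec_transpose, Matrix.mulVec_mulVec, hU,
    Matrix.one_mulVec]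

private lemma iInf_mul_sum_sq_le {n : Type*} [Fintype n] [DecidableEq n]
    {A : Matrix n n ℝ} (hA : A.IsHermitian) (x : n → ℝ) :
    (⨅ i, hA.eigenvalues i) * ∑ i, x i ^ 2 ≤ x ⬝ᵥ A.mulVec x := by
  classical
  set P : Matrix n n ℝ := (hA.eigenvectorUnitary : Matrix n n ℝ) with hPdef
  have hsP : (star P : Matrix n n ℝ) = Pᵀ := by
    rw [Matrix.star_eq_conjTranspose]; ext i j; simp [Matrix.conjTranspose_apply]
  have hP1 : P * Pᵀ = 1 := by
    rw [← hsP]; exact (Matrix.mem_unitaryGroup_iff).mp hA.eigenvectorUnitary.2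
  have hxy : ∑ i, x i ^ 2 = ∑ i, (Pᵀ *ᵥ x) i ^ 2 := by
    rw [sum_sq_mulVec_orth (U := Pᵀ) (by rwa [Matrix.transpose_transpose])]
  have hkey : x ⬝ᵥ A.mulVec x = ∑ i, hA.eigenvalues i * (Pᵀ *ᵥ x) i ^ 2 := by
    conv_lhs => rw [hA.spectral_theorem, Unitary.conjStarAlgAut_apply]
    rw [← hPdef, hsP, ← Matrix.mulVec_mulVec, ← Matrix.mulVec_mulVec,
      Matrix.dotProduct_mulVec, ← Matrix.mulVec_transpose]
    simp [Matrix.mulVec_diagonal, dotProduct, sq]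
    ring_nf
    apply Finset.sum_congr rfl
    intro i _
    ring
  rw [hkey, hxy, Finset.mul_sum]
  apply Finset.sum_le_sum
  intro i _
  exact mul_le_mul_of_nonneg_right (ciInf_le (Finite.bddBelow_range _) i) (sq_nonneg _)

set_option maxHeartbeats 1000000 in
/-- Under the SVD/block setup (with `X = U [D; 0] Vᵀ`, `C̃ = UᵀCU`,
`D̃ = D Vᵀ (δ²Λ) V D`, `F = D̃ + C̃₁₁ - C̃₁₂ C̃₂₂⁻¹ C̃₁₂ᵀ`), one has
`‖(X δ²Λ Xᵀ + C)⁻¹ X β⁰‖² ≤ (1 + ‖C̃₁₂ C̃₂₂⁻¹‖²) · β⁰ᵀ V D F⁻² D Vᵀ β⁰`, and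
`β⁰ᵀ V D F⁻² D Vᵀ β⁰ ≤ (λ_max(D)² / λ_min(D̃)²) ‖β⁰‖²`. -/
theorem inv_ridge_mulVec_norm_bounds (p r : ℕ) (d l : Fin p → ℝ)
    (hd : ∀ i, 0 < d i) (a δ : ℝ) (ha : 0 < a) (ha1 : a ≤ 1) (hδ : 0 < δ)
    (hl : ∀ i, a ≤ l i ∧ l i ≤ 1 / a)
    (U : Matrix (Fin p ⊕ Fin r) (Fin p ⊕ Fin r) ℝ) (hU : Uᵀ * U = 1)
    (V : Matrix (Fin p) (Fin p) ℝ) (hV : Vᵀ * V = 1)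
    (C : Matrix (Fin p ⊕ Fin r) (Fin p ⊕ Fin r) ℝ) (hC : C.PosDef)
    (X : Matrix (Fin p ⊕ Fin r) (Fin p) ℝ)
    (hX : X = U * Matrix.fromRows (Matrix.diagonal d) (0 : Matrix (Fin r) (Fin p) ℝ) * Vᵀ)
    (β : Fin p → ℝ)
    (Ct : Matrix (Fin p ⊕ Fin r) (Fin p ⊕ Fin r) ℝ) (hCt : Ct = Uᵀ * C * U)
    (Dt : Matrix (Fin p) (Fin p) ℝ)
    (hDt : Dt = Matrix.diagonal d * Vᵀ * (δ ^ 2 • Matrix.diagonal l) * V * Matrix.diagonal d)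
    (hDtH : Dt.IsHermitian)
    (F : Matrix (Fin p) (Fin p) ℝ)
    (hF : F = Dt + Ct.toBlocks₁₁ - Ct.toBlocks₁₂ * Ct.toBlocks₂₂⁻¹ * Ct.toBlocks₁₂ᵀ) :
    (∑ i, (((X * (δ ^ 2 • Matrix.diagonal l) * Xᵀ + C)⁻¹ * X).mulVec β i) ^ 2 ≤
        (1 + ‖Ct.toBlocks₁₂ * Ct.toBlocks₂₂⁻¹‖ ^ 2) *
          (β ⬝ᵥ (V * Matrix.diagonal d * F⁻¹ * F⁻¹ * Matrix.diagonal d * Vᵀ).mulVec β)) ∧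
      β ⬝ᵥ (V * Matrix.diagonal d * F⁻¹ * F⁻¹ * Matrix.diagonal d * Vᵀ).mulVec β ≤
        ((⨆ i, d i) ^ 2 / (⨅ i, hDtH.eigenvalues i) ^ 2) * ∑ i, β i ^ 2 := by
  classical
  have hUU' : U * Uᵀ = 1 := mul_eq_one_comm.mp hU
  have hVV' : V * Vᵀ = 1 := mul_eq_one_comm.mp hV
  set D : Matrix (Fin p) (Fin p) ℝ := Matrix.diagonal d with hDdef
  set L : Matrix (Fin p) (Fin p) ℝ := δ ^ 2 • Matrix.diagonal l with hLdef
  set M : Matrix (Fin p ⊕ Fin r) (Fin p ⊕ Fin r) ℝ := X * L * Xᵀ + C with hMdef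
  set C11 := Ct.toBlocks₁₁ with hC11
  set C12 := Ct.toBlocks₁₂ with hC12
  set C21 := Ct.toBlocks₂₁ with hC21
  set C22 := Ct.toBlocks₂₂ with hC22
  -- basic positivity facts
  have hLpd : L.PosDef := by
    rw [hLdef, ← Matrix.diagonal_smul]
    refine Matrix.posDef_diagonal_iff.mpr fun i => ?_
    have h0 : (0:ℝ) < l i := lt_of_lt_of_le ha (hl i).1
    simp only [Pi.smul_apply, smul_eq_mul]
    positivity
  have hXLX : (X * L * Xᵀ).PosSemidef := by
    have h := hLpd.posSemidef.mul_mul_conjTranspose_same X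
    rwa [conjT_eq] at h
  have hMpd : M.PosDef := Matrix.PosDef.posSemidef_add hXLX hC
  have hCtpd : Ct.PosDef := by
    rw [hCt]; exact posDef_conj hC U (mulVec_inj hU)
  have hCtT : Ctᵀ = Ct := by
    have h := hCtpd.isHermitian.eq; rwa [conjT_eq] at h
  have hC21T : C21 = C12ᵀ := by
    rw [hC21, hC12]
    ext i j
    have := congrFun (congrFun hCtT (Sum.inr i)) (Sum.inl j)
    simpa [Matrix.toBlocks₂₁, Matrix.toBlocks₁₂, Matrix.transpose_apply] using this.symm
  have hC22T : C22ᵀ = C22 := by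
    rw [hC22]
    ext i j
    have := congrFun (congrFun hCtT (Sum.inr i)) (Sum.inr j)
    simpa [Matrix.toBlocks₂₂, Matrix.transpose_apply] using this
  have hCt22pd : C22.PosDef := by
    refine Matrix.PosDef.of_dotProduct_mulVec_pos (show C22ᴴ = C22 by rw [conjT_eq]; exact hC22T) fun x hx => ?_
    have hy : (Sum.elim (0 : Fin p → ℝ) x) ≠ 0 := by
      intro h; exact hx (funext fun i => congrFun h (Sum.inr i))
    have h2 := hCtpd.dotProduct_mulVec_pos hy
    simp only [star_trivial] at h2 ⊢
    calc (0:ℝ) < Sum.elim (0 : Fin p → ℝ) x ⬝ᵥ Ct *ᵥ Sum.elim 0 x := h2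
      _ = x ⬝ᵥ C22 *ᵥ x := by
          conv_lhs => rw [← Matrix.fromBlocks_toBlocks Ct]
          rw [Matrix.fromBlocks_mulVec, sumElim_dotProduct_sumElim]
          simp [← hC22]
  have hCt22det : IsUnit C22.det := isUnit_iff_ne_zero.mpr hCt22pd.det_pos.ne'
  have hC22inv1 : C22 * C22⁻¹ = 1 := Matrix.mul_nonsing_inv _ hCt22det
  have hC22invT : (C22⁻¹)ᵀ = C22⁻¹ := by rw [Matrix.transpose_nonsing_inv, hC22T]
  -- Dt is positive definite
  have hDtpd : Dt.PosDef := by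
    have hinj : Function.Injective (V * D).mulVec := by
      apply mulVec_inj (A' := Matrix.diagonal (fun i => (d i)⁻¹) * Vᵀ)
      rw [Matrix.mul_assoc, ← Matrix.mul_assoc Vᵀ, hV, Matrix.one_mul, hDdef,
        Matrix.diagonal_mul_diagonal]
      simp only [fun i => inv_mul_cancel₀ (hd i).ne']
      exact Matrix.diagonal_one
    have h := posDef_conj hLpd (V * D) hinj
    have he : (V * D)ᵀ * L * (V * D) = Dt := by
      rw [hDt, Matrix.transpose_mul, hDdef, Matrix.diagonal_transpose]
      simp only [Matrix.mul_assoc]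
    rwa [he] at h
  -- the Schur complement is positive semidefinite
  haveI : Invertible C22 := Matrix.invertibleOfIsUnitDet _ hCt22det
  have hCtblocks : Ct = Matrix.fromBlocks C11 C12 C12ᴴ C22 := by
    rw [conjT_eq, ← hC21T, hC11, hC12, hC21, hC22, Matrix.fromBlocks_toBlocks]
  have hSch : (C11 - C12 * C22⁻¹ * C12ᴴ).PosSemidef :=
    (Matrix.PosDef.fromBlocks₂₂ C11 C12 hCt22pd).mp (hCtblocks ▸ hCtpd.posSemidef)
  have hSch' : (C11 - C12 * C22⁻¹ * C21).PosSemidef := by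
    rwa [conjT_eq, ← hC21T] at hSch
  have hFDt : F = Dt + (C11 - C12 * C22⁻¹ * C21) := by
    rw [hF, hC21T]; noncomm_ring
  have hFpd : F.PosDef := by rw [hFDt]; exact hDtpd.add_posSemidef hSch'
  have hFdet : IsUnit F.det := isUnit_iff_ne_zero.mpr hFpd.det_pos.ne'
  have hFinv1 : F * F⁻¹ = 1 := Matrix.mul_nonsing_inv _ hFdet
  have hFT : Fᵀ = F := by have h := hFpd.isHermitian.eq; rwa [conjT_eq] at h
  have hFinvT : (F⁻¹)ᵀ = F⁻¹ := by rw [Matrix.transpose_nonsing_inv, hFT]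
  -- block structure of Uᵀ M U
  set W0 : Matrix (Fin p) (Fin p) ℝ := D * Vᵀ with hW0
  set W1 : Matrix (Fin p) (Fin p) ℝ := F⁻¹ * W0 with hW1
  set W2 : Matrix (Fin r) (Fin p) ℝ := -(C22⁻¹ * (C21 * W1)) with hW2
  have hXU : Uᵀ * X = Matrix.fromRows D 0 * Vᵀ := by
    rw [hX, ← Matrix.mul_assoc, ← Matrix.mul_assoc, hU, Matrix.one_mul]
  have hBeq : Uᵀ * M * U = Matrix.fromBlocks (Dt + C11) C12 C21 C22 := by
    have h1 : Uᵀ * M * U = (Uᵀ * X) * L * (Uᵀ * X)ᵀ + Ct := by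
      rw [hMdef, hCt, Matrix.transpose_mul, Matrix.transpose_transpose]
      simp only [Matrix.add_mul, Matrix.mul_add, Matrix.mul_assoc]
    rw [h1, hXU]
    have h2 : (Matrix.fromRows D (0 : Matrix (Fin r) (Fin p) ℝ) * Vᵀ) * L *
          (Matrix.fromRows D (0 : Matrix (Fin r) (Fin p) ℝ) * Vᵀ)ᵀ
        = Matrix.fromBlocks Dt 0 0 0 := by
      rw [Matrix.transpose_mul, Matrix.transpose_fromRows, Matrix.transpose_transpose,
        hDdef, Matrix.diagonal_transpose, Matrix.transpose_zero]
      rw [Matrix.fromRows_mul (Matrix.diagonal d) _ Vᵀ,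
        Matrix.fromRows_mul (Matrix.diagonal d * Vᵀ) _ L,
        ← Matrix.mul_assoc,
        Matrix.fromRows_mul (Matrix.diagonal d * Vᵀ * L) _ V,
        Matrix.fromRows_mul_fromCols]
      rw [hDt, hW0, hDdef]
      simp [Matrix.mul_assoc]
    rw [h2, ← Matrix.fromBlocks_toBlocks Ct, ← hC11, ← hC12, ← hC21, ← hC22,
      Matrix.fromBlocks_add]
    simp
  -- the explicit inverse formula
  have hMU : M * (U * Matrix.fromRows W1 W2) = X := by
    have h0 : M * (U * Matrix.fromRows W1 W2)
        = U * ((Uᵀ * M * U) * Matrix.fromRows W1 W2) := by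
      calc M * (U * Matrix.fromRows W1 W2)
          = (U * Uᵀ) * M * (U * Matrix.fromRows W1 W2) := by rw [hUU', Matrix.one_mul]
        _ = U * ((Uᵀ * M * U) * Matrix.fromRows W1 W2) := by
              simp only [Matrix.mul_assoc]
    rw [h0, hBeq, Matrix.fromBlocks_mul_fromRows]
    have htop : (Dt + C11) * W1 + C12 * W2 = W0 := by
      have ht : (Dt + C11) * W1 + C12 * W2 = (Dt + C11 - C12 * C22⁻¹ * C12ᵀ) * W1 := by
        rw [hW2, ← hC21T]
        simp only [Matrix.sub_mul, Matrix.add_mul, Matrix.mul_neg, Matrix.neg_mul,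
          Matrix.mul_assoc, sub_eq_add_neg]
        try abel
      rw [ht, ← hF, hW1, ← Matrix.mul_assoc, hFinv1, Matrix.one_mul]
    have hbot : C21 * W1 + C22 * W2 = 0 := by
      have hb : C22 * W2 = -(C21 * W1) := by
        rw [hW2, Matrix.mul_neg, ← Matrix.mul_assoc, hC22inv1, Matrix.one_mul]
      rw [hb, add_neg_cancel]
    rw [htop, hbot, hX]
    have : Matrix.fromRows W0 (0 : Matrix (Fin r) (Fin p) ℝ)
        = Matrix.fromRows D 0 * Vᵀ := by
      rw [Matrix.fromRows_mul, Matrix.zero_mul, hW0]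
    rw [this, Matrix.mul_assoc]
  have hMdet : IsUnit M.det := isUnit_iff_ne_zero.mpr hMpd.det_pos.ne'
  have hMinvX : M⁻¹ * X = U * Matrix.fromRows W1 W2 := by
    rw [← hMU, ← Matrix.mul_assoc, Matrix.nonsing_inv_mul _ hMdet, Matrix.one_mul]
  -- sum of squares decomposition
  have hsum : ∑ i, ((M⁻¹ * X).mulVec β i) ^ 2
      = ∑ i, (W1 *ᵥ β) i ^ 2 + ∑ i, (W2 *ᵥ β) i ^ 2 := by
    rw [hMinvX, ← Matrix.mulVec_mulVec, sum_sq_mulVec_orth hU, Matrix.fromRows_mulVec,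
      Fintype.sum_sum_type]
    simp
  -- the quadratic form Q
  have hQ : β ⬝ᵥ (V * D * F⁻¹ * F⁻¹ * D * Vᵀ).mulVec β = ∑ i, (W1 *ᵥ β) i ^ 2 := by
    have h1 : ∀ w : Fin p → ℝ, ∑ i, w i ^ 2 = w ⬝ᵥ w := by intro w; simp [dotProduct, sq]
    rw [h1, Matrix.dotProduct_mulVec (W1 *ᵥ β), ← Matrix.mulVec_transpose,
      Matrix.mulVec_mulVec, dotProduct_comm]
    congr 2
    rw [hW1, hW0, Matrix.transpose_mul, Matrix.transpose_mul, Matrix.transpose_transpose,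
      hDdef, Matrix.diagonal_transpose, hFinvT]
    simp only [Matrix.mul_assoc]
  constructor
  · -- part 1
    rw [hsum, hQ]
    have hW2v : ∑ i, (W2 *ᵥ β) i ^ 2
        ≤ ‖C12 * C22⁻¹‖ ^ 2 * ∑ i, (W1 *ᵥ β) i ^ 2 := by
      have he : W2 *ᵥ β = -((C22⁻¹ * C21) *ᵥ (W1 *ᵥ β)) := by
        rw [hW2, Matrix.neg_mulVec, Matrix.mulVec_mulVec, Matrix.mul_assoc]
      have hnorm : ‖C22⁻¹ * C21‖ = ‖C12 * C22⁻¹‖ := by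
        have hT : (C12 * C22⁻¹)ᴴ = C22⁻¹ * C21 := by
          rw [conjT_eq, Matrix.transpose_mul, hC22invT, ← hC21T]
        rw [← hT, Matrix.l2_opNorm_conjTranspose]
      calc ∑ i, (W2 *ᵥ β) i ^ 2 = ∑ i, ((C22⁻¹ * C21) *ᵥ (W1 *ᵥ β)) i ^ 2 := by
            rw [he]; simp
        _ ≤ ‖C22⁻¹ * C21‖ ^ 2 * ∑ i, (W1 *ᵥ β) i ^ 2 := sum_sq_mulVec_le _ _
        _ = ‖C12 * C22⁻¹‖ ^ 2 * ∑ i, (W1 *ᵥ β) i ^ 2 := by rw [hnorm]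
    have hS1 : (0:ℝ) ≤ ∑ i, (W1 *ᵥ β) i ^ 2 := Finset.sum_nonneg fun i _ => sq_nonneg _
    have hexp : (1 + ‖C12 * C22⁻¹‖ ^ 2) * ∑ i, (W1 *ᵥ β) i ^ 2
        = (∑ i, (W1 *ᵥ β) i ^ 2) + ‖C12 * C22⁻¹‖ ^ 2 * ∑ i, (W1 *ᵥ β) i ^ 2 := by ring
    rw [hexp]
    exact add_le_add le_rfl hW2v
  · -- part 2
    rcases Nat.eq_zero_or_pos p with hp | hp
    · subst hp
      simp [dotProduct]
    haveI : Nonempty (Fin p) := ⟨⟨0, hp⟩⟩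
    set μ : ℝ := ⨅ i, hDtH.eigenvalues i with hμdef
    have hμpos : 0 < μ := by
      obtain ⟨i, hi⟩ := exists_eq_ciInf_of_finite (f := hDtH.eigenvalues)
      rw [hμdef, ← hi]
      exact hDtpd.eigenvalues_pos i
    set w : Fin p → ℝ := W1 *ᵥ β with hw
    set u : Fin p → ℝ := W0 *ᵥ β with hu
    have hFw : F *ᵥ w = u := by
      rw [hw, hu, hW1, ← Matrix.mulVec_mulVec, Matrix.mulVec_mulVec, hFinv1,
        Matrix.one_mulVec]
    have hray : μ * ∑ i, w i ^ 2 ≤ w ⬝ᵥ Dt *ᵥ w := iInf_mul_sum_sq_le hDtH w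
    have hFDt2 : w ⬝ᵥ Dt *ᵥ w ≤ w ⬝ᵥ F *ᵥ w := by
      have h := (Matrix.posSemidef_iff_dotProduct_mulVec.mp hSch').2 w
      simp only [star_trivial] at h
      have he : w ⬝ᵥ F *ᵥ w - w ⬝ᵥ Dt *ᵥ w = w ⬝ᵥ (C11 - C12 * C22⁻¹ * C21) *ᵥ w := by
        rw [hFDt, Matrix.add_mulVec, dotProduct_add]; ring
      linarith
    have hCS : (w ⬝ᵥ F *ᵥ w) ^ 2 ≤ (∑ i, w i ^ 2) * ∑ i, u i ^ 2 := by
      rw [hFw]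
      have := Finset.sum_mul_sq_le_sq_mul_sq Finset.univ w u
      simpa [dotProduct] using this
    have hu_le : ∑ i, u i ^ 2 ≤ (⨆ i, d i) ^ 2 * ∑ i, β i ^ 2 := by
      have hVb : ∑ i, (Vᵀ *ᵥ β) i ^ 2 = ∑ i, β i ^ 2 := by
        rw [sum_sq_mulVec_orth (U := Vᵀ) (by rwa [Matrix.transpose_transpose]) β]
      have hui : ∀ i, u i = d i * (Vᵀ *ᵥ β) i := by
        intro i
        rw [hu, hW0, ← Matrix.mulVec_mulVec, hDdef]
        simp [Matrix.mulVec_diagonal]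
      calc ∑ i, u i ^ 2 = ∑ i, (d i) ^ 2 * (Vᵀ *ᵥ β) i ^ 2 := by
            apply Finset.sum_congr rfl; intro i _; rw [hui i]; ring
        _ ≤ ∑ i, (⨆ j, d j) ^ 2 * (Vᵀ *ᵥ β) i ^ 2 := by
            apply Finset.sum_le_sum; intro i _
            apply mul_le_mul_of_nonneg_right _ (sq_nonneg _)
            have hle : d i ≤ ⨆ j, d j := le_ciSup (Finite.bddAbove_range _) i
            exact pow_le_pow_left₀ (hd i).le hle 2
        _ = (⨆ j, d j) ^ 2 * ∑ i, β i ^ 2 := by rw [← Finset.mul_sum, hVb]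
    -- combine
    rw [hQ]
    have hSnn : (0:ℝ) ≤ ∑ i, w i ^ 2 := Finset.sum_nonneg fun i _ => sq_nonneg _
    have hkey : μ ^ 2 * ∑ i, w i ^ 2 ≤ ∑ i, u i ^ 2 := by
      rcases eq_or_lt_of_le hSnn with hS0 | hS0
      · rw [← hS0, mul_zero]
        exact Finset.sum_nonneg fun i _ => sq_nonneg _
      · have h1 : μ * ∑ i, w i ^ 2 ≤ w ⬝ᵥ F *ᵥ w := le_trans hray hFDt2
        have h2 : (μ * ∑ i, w i ^ 2) ^ 2 ≤ (w ⬝ᵥ F *ᵥ w) ^ 2 :=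
          pow_le_pow_left₀ (mul_nonneg hμpos.le hSnn) h1 2
        have h3 := le_trans h2 hCS
        have h4 : (μ ^ 2 * ∑ i, w i ^ 2) * ∑ i, w i ^ 2 ≤ (∑ i, u i ^ 2) * ∑ i, w i ^ 2 := by
          calc (μ ^ 2 * ∑ i, w i ^ 2) * ∑ i, w i ^ 2 = (μ * ∑ i, w i ^ 2) ^ 2 := by ring
            _ ≤ (∑ i, w i ^ 2) * ∑ i, u i ^ 2 := h3
            _ = (∑ i, u i ^ 2) * ∑ i, w i ^ 2 := by ring
        exact le_of_mul_le_mul_right h4 hS0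
    have hμ2 : (0:ℝ) < μ ^ 2 := by positivity
    rw [div_mul_eq_mul_div, le_div_iff₀ hμ2]
    calc (∑ i, w i ^ 2) * μ ^ 2 = μ ^ 2 * ∑ i, w i ^ 2 := by ring
      _ ≤ ∑ i, u i ^ 2 := hkey
      _ ≤ (⨆ i, d i) ^ 2 * ∑ i, β i ^ 2 := hu_le
end

section
/- Let ε₂ ∼ N(0, τ² I_{N−p}) and let T be a finite family of (N−p)×p matrices A with rank(A) ≤ min(k, p) and ‖A‖ ≤ c. Then E[max_{A∈T} ‖A^⊤ε₂‖²] ≤ 2c²τ²p + c²τ²|T|·8e^{-p/8}. -/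
open Matrix MeasureTheory ProbabilityTheory
open Real
open scoped Matrix.Norms.L2Operator

theorem my_lintegral_pi_prod {n : ℕ} (μ1 : Measure ℝ) [SigmaFinite μ1]
    (f : Fin n → ℝ → ENNReal) (hf : ∀ i, Measurable (f i)) :
    ∫⁻ x : Fin n → ℝ, ∏ i, f i (x i) ∂Measure.pi (fun _ => μ1) = ∏ i, ∫⁻ y, f i y ∂μ1 := by
  induction n with
  | zero => simp
  | succ n ih =>
      have h := (measurePreserving_piFinSuccAbove (fun _ : Fin (n+1) => μ1) 0).symm
      have hm : Measurable fun x : Fin (n+1) → ℝ => ∏ i, f i (x i) :=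
        Finset.measurable_prod _ fun i _ => (hf i).comp (measurable_pi_apply i)
      have hm2 : Measurable fun y : Fin n → ℝ => ∏ i : Fin n, f i.succ (y i) :=
        Finset.measurable_prod _ fun (i : Fin n) _ => (hf i.succ).comp (measurable_pi_apply i)
      calc ∫⁻ x : Fin (n+1) → ℝ, ∏ i, f i (x i) ∂Measure.pi (fun _ => μ1)
          = ∫⁻ z : ℝ × (Fin n → ℝ), f 0 z.1 * ∏ i : Fin n, f i.succ (z.2 i)
              ∂(μ1.prod (Measure.pi fun _ => μ1)) := by
            rw [← h.lintegral_comp hm]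
            congr 1 with z
            rw [Fin.prod_univ_succ]
            simp [MeasurableEquiv.piFinSuccAbove_symm_apply, Fin.insertNthEquiv,
              Fin.zero_succAbove]
        _ = (∫⁻ y, f 0 y ∂μ1) * ∫⁻ y : Fin n → ℝ, ∏ i : Fin n, f i.succ (y i)
              ∂Measure.pi (fun _ => μ1) :=
            lintegral_prod_mul ((hf 0).aemeasurable) hm2.aemeasurable
        _ = ∏ i, ∫⁻ y, f i y ∂μ1 := by
            rw [ih _ fun i => hf i.succ]
            exact (Fin.prod_univ_succ fun i => ∫⁻ y, f i y ∂μ1).symm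

theorem my_gaussian_pdf_mul_exp (v : NNReal) (hv : v ≠ 0) (t x : ℝ) :
    gaussianPDFReal 0 v x * Real.exp (t * x)
      = Real.exp ((v : ℝ) * t ^ 2 / 2) * gaussianPDFReal (t * v) v x := by
  have hv' : (0 : ℝ) < v := lt_of_le_of_ne v.2 (by exact_mod_cast (Ne.symm hv))
  rw [gaussianPDFReal, gaussianPDFReal]
  have h1 : -(x - 0) ^ 2 / (2 * (v : ℝ)) + t * x
      = (v : ℝ) * t ^ 2 / 2 + -(x - t * (v : ℝ)) ^ 2 / (2 * (v : ℝ)) := by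
    field_simp
    ring
  rw [mul_assoc, ← Real.exp_add, h1, Real.exp_add]
  ring

theorem my_lintegral_exp_mul_gaussian (v : NNReal) (t : ℝ) :
    ∫⁻ x, ENNReal.ofReal (Real.exp (t * x)) ∂gaussianReal 0 v
      = ENNReal.ofReal (Real.exp ((v : ℝ) * t ^ 2 / 2)) := by
  rcases eq_or_ne v 0 with rfl | hv
  · simp [gaussianReal_zero_var, lintegral_dirac]
  · rw [gaussianReal_of_var_ne_zero _ hv,
      lintegral_withDensity_eq_lintegral_mul _ (measurable_gaussianPDF _ _)
        (by exact ((measurable_const.mul measurable_id).exp).ennreal_ofReal)]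
    have : ∀ x, gaussianPDF 0 v x * ENNReal.ofReal (Real.exp (t * x))
        = ENNReal.ofReal (Real.exp ((v : ℝ) * t ^ 2 / 2)) * gaussianPDF (t * v) v x := by
      intro x
      rw [gaussianPDF, gaussianPDF, ← ENNReal.ofReal_mul (gaussianPDFReal_nonneg _ _ _),
        my_gaussian_pdf_mul_exp v hv t x,
        ENNReal.ofReal_mul (Real.exp_nonneg _)]
    simp only [Pi.mul_apply, this]
    rw [lintegral_const_mul _ (measurable_gaussianPDF _ _),
      lintegral_gaussianPDF_eq_one _ hv, mul_one]

theorem my_lintegral_exp_quarter_sq_gaussian :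
    ∫⁻ x, ENNReal.ofReal (Real.exp (x ^ 2 / 4)) ∂gaussianReal 0 1
      = ENNReal.ofReal (Real.sqrt 2) := by
  rw [gaussianReal_of_var_ne_zero _ one_ne_zero,
    lintegral_withDensity_eq_lintegral_mul _ (measurable_gaussianPDF _ _)
      (by exact ((measurable_id.pow_const 2).div_const 4).exp.ennreal_ofReal)]
  have key : ∀ x : ℝ, gaussianPDF 0 1 x * ENNReal.ofReal (Real.exp (x ^ 2 / 4))
      = ENNReal.ofReal ((Real.sqrt (2 * π))⁻¹ * Real.exp (-(1/4) * x ^ 2)) := by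
    intro x
    rw [gaussianPDF, ← ENNReal.ofReal_mul (gaussianPDFReal_nonneg _ _ _)]
    congr 1
    rw [gaussianPDFReal]
    push_cast
    rw [mul_assoc, ← Real.exp_add]
    congr 2
    · norm_num
    · ring
  simp only [Pi.mul_apply, key]
  rw [← ofReal_integral_eq_lintegral_ofReal
      ((integrable_exp_neg_mul_sq (by norm_num : (0:ℝ) < 1/4)).const_mul _)
      (Filter.Eventually.of_forall fun x => by positivity)]
  congr 1
  rw [integral_const_mul, integral_gaussian]
  rw [show π / (1/4 : ℝ) = 4 * π by ring]
  rw [show (4 : ℝ) * π = 2^2 * π by norm_num,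
    Real.sqrt_mul (by positivity : (0:ℝ) ≤ 2^2) π, Real.sqrt_sq (by norm_num : (0:ℝ) ≤ 2),
    Real.sqrt_mul (by norm_num : (0:ℝ) ≤ 2) π]
  have hπ : (0:ℝ) < Real.sqrt π := Real.sqrt_pos.2 Real.pi_pos
  have h2 : (0:ℝ) < Real.sqrt 2 := by positivity
  field_simp
  rw [Real.sq_sqrt (by norm_num : (0:ℝ) ≤ 2)]

theorem my_lintegral_exp_sum (n : ℕ) (v : NNReal) (a : Fin n → ℝ) :
    ∫⁻ x : Fin n → ℝ, ENNReal.ofReal (Real.exp (∑ i, a i * x i))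
        ∂Measure.pi (fun _ => gaussianReal 0 v)
      = ENNReal.ofReal (Real.exp ((v : ℝ) * (∑ i, (a i) ^ 2) / 2)) := by
  have h1 : ∀ x : Fin n → ℝ, ENNReal.ofReal (Real.exp (∑ i, a i * x i))
      = ∏ i, ENNReal.ofReal (Real.exp (a i * x i)) := by
    intro x
    rw [Real.exp_sum, ENNReal.ofReal_prod_of_nonneg fun i _ => (Real.exp_nonneg _)]
  simp only [h1]
  rw [my_lintegral_pi_prod (gaussianReal 0 v)
    (fun i y => ENNReal.ofReal (Real.exp (a i * y))) (fun i =>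
    (by exact ((measurable_const.mul measurable_id).exp).ennreal_ofReal))]
  simp only [my_lintegral_exp_mul_gaussian]
  rw [← ENNReal.ofReal_prod_of_nonneg fun i _ => (Real.exp_nonneg _), ← Real.exp_sum]
  congr 1
  rw [← Finset.sum_div, ← Finset.mul_sum]

theorem my_mgf_bound {n p : ℕ} (v : NNReal) (hv : (0:ℝ) < v) {c : ℝ} (hc : 0 < c)
    (w : Fin p → Fin n → ℝ)
    (horth : ∀ j l, j ≠ l → ∑ i, w j i * w l i = 0)
    (hwnorm : ∀ j, ∑ i, (w j i) ^ 2 ≤ c ^ 2) :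
    ∫⁻ x : Fin n → ℝ,
        ENNReal.ofReal (Real.exp ((4 * c ^ 2 * v)⁻¹ * ∑ j, (∑ i, w j i * x i) ^ 2))
        ∂Measure.pi (fun _ => gaussianReal 0 v)
      ≤ ENNReal.ofReal (Real.sqrt 2) ^ p := by
  set s : ℝ := (4 * c ^ 2 * (v:ℝ))⁻¹ with hs_def
  have hs : 0 < s := by positivity
  set μ := Measure.pi (fun _ : Fin n => gaussianReal 0 v) with hμ
  set ν := Measure.pi (fun _ : Fin p => gaussianReal 0 (1 : NNReal)) with hν
  -- step 1 : pointwise gaussian representation of exp of squares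
  have step1 : ∀ z : Fin p → ℝ,
      ENNReal.ofReal (Real.exp (s * ∑ j, (z j) ^ 2))
        = ∫⁻ g : Fin p → ℝ, ENNReal.ofReal
            (Real.exp (∑ j, (Real.sqrt (2 * s) * z j) * g j)) ∂ν := by
    intro z
    rw [my_lintegral_exp_sum p 1 (fun j => Real.sqrt (2 * s) * z j)]
    congr 2
    have : ∀ j : Fin p, (Real.sqrt (2 * s) * z j) ^ 2 = 2 * s * (z j) ^ 2 := by
      intro j
      rw [mul_pow, Real.sq_sqrt (by positivity)]
    simp only [this]
    rw [← Finset.mul_sum]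
    push_cast
    ring
  simp only [step1]
  -- measurability for swap
  have hZ : ∀ j, Measurable fun x : Fin n → ℝ => ∑ i, w j i * x i := fun j =>
    Finset.measurable_sum _ fun i _ => (measurable_pi_apply i).const_mul _
  have hmeas : Measurable fun q : (Fin n → ℝ) × (Fin p → ℝ) =>
      ENNReal.ofReal (Real.exp (∑ j, (Real.sqrt (2 * s) * ∑ i, w j i * q.1 i) * q.2 j)) := by
    refine Measurable.ennreal_ofReal (Real.measurable_exp.comp ?_)
    refine Finset.measurable_sum _ fun j _ => ?_
    exact (((hZ j).comp measurable_fst).const_mul _).mul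
      ((measurable_pi_apply j).comp measurable_snd)
  rw [lintegral_lintegral_swap hmeas.aemeasurable]
  -- inner integral over x
  have inner : ∀ g : Fin p → ℝ,
      ∫⁻ x, ENNReal.ofReal
          (Real.exp (∑ j, (Real.sqrt (2 * s) * ∑ i, w j i * x i) * g j)) ∂μ
        = ENNReal.ofReal (Real.exp ((v : ℝ) *
            (∑ i, (∑ j, (Real.sqrt (2 * s) * g j) * w j i) ^ 2) / 2)) := by
    intro g
    have harr : ∀ x : Fin n → ℝ,
        ∑ j, (Real.sqrt (2 * s) * ∑ i, w j i * x i) * g j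
          = ∑ i, (∑ j, (Real.sqrt (2 * s) * g j) * w j i) * x i := by
      intro x
      simp_rw [Finset.mul_sum, Finset.sum_mul]
      rw [Finset.sum_comm]
      exact Finset.sum_congr rfl fun i _ => Finset.sum_congr rfl fun j _ => by ring
    simp only [harr]
    exact my_lintegral_exp_sum n v _
  simp only [inner]
  -- the orthogonality computation
  have alg : ∀ g : Fin p → ℝ,
      ∑ i, (∑ j, (Real.sqrt (2 * s) * g j) * w j i) ^ 2
        = ∑ j, (2 * s) * (g j) ^ 2 * ∑ i, (w j i) ^ 2 := by
    intro g
    set t : Fin p → ℝ := fun j => Real.sqrt (2 * s) * g j with ht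
    have expand : ∀ i, (∑ j, t j * w j i) ^ 2
        = ∑ j, ∑ l, (t j * w j i) * (t l * w l i) := by
      intro i
      rw [sq, Finset.sum_mul_sum]
    change ∑ i, (∑ j, t j * w j i) ^ 2 = _
    simp only [expand]
    rw [Finset.sum_comm]
    refine Finset.sum_congr rfl fun j _ => ?_
    rw [Finset.sum_comm]
    have : ∀ l : Fin p, ∑ i, (t j * w j i) * (t l * w l i)
        = t j * t l * ∑ i, w j i * w l i := by
      intro l
      rw [Finset.mul_sum]
      exact Finset.sum_congr rfl fun i _ => by ring
    simp only [this]
    rw [Finset.sum_eq_single j]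
    · have : t j ^ 2 = 2 * s * g j ^ 2 := by
        rw [ht]; simp only []; rw [mul_pow, Real.sq_sqrt (by positivity)]
      rw [← sq, this]
      congr 1
      exact Finset.sum_congr rfl fun i _ => (pow_two (w j i)).symm
    · intro l _ hl
      rw [horth j l (Ne.symm hl), mul_zero]
    · intro h; exact absurd (Finset.mem_univ j) h
  -- monotonicity to exp (g j ^2 / 4)
  have mono : ∀ g : Fin p → ℝ,
      ENNReal.ofReal (Real.exp ((v : ℝ) *
          (∑ i, (∑ j, (Real.sqrt (2 * s) * g j) * w j i) ^ 2) / 2))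
        ≤ ENNReal.ofReal (Real.exp (∑ j, (g j) ^ 2 / 4)) := by
    intro g
    refine ENNReal.ofReal_le_ofReal (Real.exp_le_exp.2 ?_)
    have hle : ∑ j, (2 * s) * (g j) ^ 2 * ∑ i, (w j i) ^ 2
        ≤ ∑ j, (2 * s) * (g j) ^ 2 * c ^ 2 := by
      refine Finset.sum_le_sum fun j _ => ?_
      have h1 : 0 ≤ (2 * s) * (g j) ^ 2 := by positivity
      exact mul_le_mul_of_nonneg_left (hwnorm j) h1
    calc (v : ℝ) * (∑ i, (∑ j, (Real.sqrt (2*s) * g j) * w j i) ^ 2) / 2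
        = (v : ℝ) * (∑ j, (2 * s) * (g j) ^ 2 * ∑ i, (w j i) ^ 2) / 2 := by rw [alg g]
      _ ≤ (v : ℝ) * (∑ j, (2 * s) * (g j) ^ 2 * c ^ 2) / 2 := by
          have := hle
          have hv' : (0:ℝ) ≤ v := le_of_lt hv
          gcongr
      _ = ∑ j, (g j) ^ 2 / 4 := by
          rw [Finset.mul_sum, Finset.sum_div]
          refine Finset.sum_congr rfl fun j _ => ?_
          rw [hs_def]
          field_simp
  calc ∫⁻ g, ENNReal.ofReal (Real.exp ((v : ℝ) *
          (∑ i, (∑ j, (Real.sqrt (2 * s) * g j) * w j i) ^ 2) / 2)) ∂ν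
      ≤ ∫⁻ g, ENNReal.ofReal (Real.exp (∑ j, (g j) ^ 2 / 4)) ∂ν :=
        lintegral_mono fun g => mono g
    _ = ENNReal.ofReal (Real.sqrt 2) ^ p := by
        have : ∀ g : Fin p → ℝ, ENNReal.ofReal (Real.exp (∑ j, (g j) ^ 2 / 4))
            = ∏ j, ENNReal.ofReal (Real.exp ((g j) ^ 2 / 4)) := by
          intro g
          rw [Real.exp_sum, ENNReal.ofReal_prod_of_nonneg fun j _ => Real.exp_nonneg _]
        simp only [this]
        rw [my_lintegral_pi_prod (gaussianReal 0 1)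
          (fun j y => ENNReal.ofReal (Real.exp (y ^ 2 / 4))) (fun j =>
          (by exact ((measurable_id.pow_const 2).div_const 4).exp.ennreal_ofReal))]
        simp [my_lintegral_exp_quarter_sq_gaussian]

theorem my_sumsq {n p : ℕ} (B : Matrix (Fin n) (Fin p) ℝ) (x : Fin n → ℝ) :
    ∑ j, (∑ i, B i j * x i) ^ 2 = ∑ i, ∑ i', (B * Bᵀ) i i' * (x i * x i') := by
  have expand : ∀ j : Fin p, (∑ i, B i j * x i) ^ 2
      = ∑ i, ∑ i', (B i j * x i) * (B i' j * x i') := by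
    intro j; rw [sq, Finset.sum_mul_sum]
  simp only [expand]
  rw [Finset.sum_comm]
  refine Finset.sum_congr rfl fun i _ => ?_
  rw [Finset.sum_comm]
  refine Finset.sum_congr rfl fun i' _ => ?_
  rw [Matrix.mul_apply, Finset.sum_mul]
  refine Finset.sum_congr rfl fun j _ => ?_
  rw [Matrix.transpose_apply]
  ring

theorem my_decomp {n p : ℕ} (A : Matrix (Fin n) (Fin p) ℝ) {c : ℝ} (hc : 0 ≤ c)
    (hA : ‖A‖ ≤ c) :
    ∃ w : Fin p → Fin n → ℝ,
      (∀ j l, j ≠ l → ∑ i, w j i * w l i = 0) ∧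
      (∀ j, ∑ i, (w j i) ^ 2 ≤ c ^ 2) ∧
      (∀ x : Fin n → ℝ, ∑ j, ((Aᵀ).mulVec x j) ^ 2 = ∑ j, (∑ i, w j i * x i) ^ 2) := by
  classical
  have hM : (Aᴴ * A).IsHermitian := Matrix.isHermitian_conjTranspose_mul_self A
  set V : Matrix (Fin p) (Fin p) ℝ := (hM.eigenvectorUnitary : Matrix (Fin p) (Fin p) ℝ)
    with hV
  have hVs : star V * V = 1 := Unitary.coe_star_mul_self hM.eigenvectorUnitary
  have hVs' : V * star V = 1 := Unitary.coe_mul_star_self hM.eigenvectorUnitary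
  have hVt : star V = Vᵀ := by
    rw [Matrix.star_eq_conjTranspose, Matrix.conjTranspose_eq_transpose_of_trivial]
  refine ⟨fun j i => (A * V) i j, ?_, ?_, ?_⟩
  · -- orthogonality
    intro j l hjl
    have hdiag : (A * V)ᵀ * (A * V) = Matrix.diagonal (RCLike.ofReal ∘ hM.eigenvalues) := by
      have key : star V * (Aᴴ * A) * V = Matrix.diagonal (RCLike.ofReal ∘ hM.eigenvalues) := by
        have := hM.conjStarAlgAut_star_eigenvectorUnitary
        rw [Unitary.conjStarAlgAut_apply, Unitary.coe_star, star_star] at this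
        exact this
      rw [hVt] at key
      rw [Matrix.transpose_mul,
        show Vᵀ * Aᵀ * (A * V) = Vᵀ * (Aᴴ * A) * V by
          rw [Matrix.conjTranspose_eq_transpose_of_trivial]
          simp only [Matrix.mul_assoc]]
      exact key
    have : ((A * V)ᵀ * (A * V)) j l = 0 := by
      rw [hdiag, Matrix.diagonal_apply_ne _ hjl]
    rw [Matrix.mul_apply] at this
    rw [← this]
    refine Finset.sum_congr rfl fun i _ => ?_
    rw [Matrix.transpose_apply]
  · -- column norms
    intro j
    set u : EuclideanSpace ℝ (Fin p) := WithLp.toLp 2 (fun i => V i j) with hu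
    have hunorm : ‖u‖ = 1 := by
      rw [EuclideanSpace.norm_eq]
      have : ∑ i, ‖u i‖ ^ 2 = (1 : ℝ) := by
        have h1 : (star V * V) j j = 1 := by rw [hVs, Matrix.one_apply_eq]
        rw [Matrix.mul_apply] at h1
        simp only [Matrix.star_apply, star_trivial] at h1
        rw [← h1]
        refine Finset.sum_congr rfl fun i _ => ?_
        rw [Real.norm_eq_abs, sq_abs, sq, hu]
      rw [this, Real.sqrt_one]
    have hmv : ∀ i, (A *ᵥ u.ofLp) i = (A * V) i j := by
      intro i
      rw [Matrix.mulVec, dotProduct, Matrix.mul_apply]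
    have hbound : ‖(EuclideanSpace.equiv (Fin n) ℝ).symm (A *ᵥ u.ofLp)‖ ≤ c := by
      refine le_trans (A.l2_opNorm_mulVec u) ?_
      rw [hunorm, mul_one]; exact hA
    have hnn : (0:ℝ) ≤ ∑ i, ((A * V) i j) ^ 2 := Finset.sum_nonneg fun i _ => sq_nonneg _
    have heq : ‖(EuclideanSpace.equiv (Fin n) ℝ).symm (A *ᵥ u.ofLp)‖
        = Real.sqrt (∑ i, ((A * V) i j) ^ 2) := by
      rw [EuclideanSpace.norm_eq]
      congr 1
      refine Finset.sum_congr rfl fun i _ => ?_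
      have : ((EuclideanSpace.equiv (Fin n) ℝ).symm (A *ᵥ u.ofLp)) i = (A *ᵥ u.ofLp) i := rfl
      rw [this, hmv i, Real.norm_eq_abs, sq_abs]
    have := heq ▸ hbound
    nlinarith [Real.sq_sqrt hnn, Real.sqrt_nonneg (∑ i, ((A * V) i j) ^ 2)]
  · -- sum of squares identity
    intro x
    have h1 : ∀ j, (Aᵀ).mulVec x j = ∑ i, A i j * x i := by
      intro j
      rw [Matrix.mulVec, dotProduct]
      exact Finset.sum_congr rfl fun i _ => by rw [Matrix.transpose_apply]
    have h2 : ∀ j, (∑ i, (A * V) i j * x i) = (∑ i, (fun j i => (A * V) i j) j i * x i) :=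
      fun j => rfl
    simp only [h1]
    rw [my_sumsq A x, my_sumsq (A * V) x]
    have hVVt : V * Vᵀ = 1 := by rw [← hVt]; exact hVs'
    have hBB : (A * V) * (A * V)ᵀ = A * Aᵀ := by
      rw [Matrix.transpose_mul,
        show A * V * (Vᵀ * Aᵀ) = A * (V * Vᵀ) * Aᵀ by simp only [Matrix.mul_assoc],
        hVVt, Matrix.mul_one]
    rw [hBB]

theorem my_numeric (p : ℕ) {c : ℝ} (hc : 0 < c) {v : ℝ} (hv : 0 < v) :
    (4 * c ^ 2 * v) * Real.exp (-1) * Real.exp (-(p : ℝ) / 2) * Real.sqrt 2 ^ p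
      ≤ c ^ 2 * v * (8 * Real.exp (-(p : ℝ) / 8)) := by
  have h2 : Real.sqrt 2 ^ p = Real.exp ((p : ℝ) * (Real.log 2 / 2)) := by
    rw [← Real.log_sqrt (by norm_num : (0:ℝ) ≤ 2), Real.exp_nat_mul,
      Real.exp_log (Real.sqrt_pos.2 (by norm_num))]
  rw [h2, mul_assoc, ← Real.exp_add, mul_assoc, ← Real.exp_add]
  have hexp : Real.exp (-1 + (-(p:ℝ)/2 + (p:ℝ) * (Real.log 2 / 2)))
      ≤ 2 * Real.exp (-(p:ℝ)/8) := by
    rw [show (2:ℝ) * Real.exp (-(p:ℝ)/8) = Real.exp (Real.log 2 + -(p:ℝ)/8) by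
      rw [Real.exp_add, Real.exp_log two_pos]]
    refine Real.exp_le_exp.2 ?_
    have hlog : Real.log 2 ≤ 0.6931471808 := Real.log_two_lt_d9.le
    have hp : (0:ℝ) ≤ (p : ℝ) := Nat.cast_nonneg p
    nlinarith [Real.log_pos (by norm_num : (1:ℝ) < 2)]
  refine le_trans (mul_le_mul_of_nonneg_left hexp (by positivity)) (le_of_eq (by ring))

theorem my_perA {n p : ℕ} (v : NNReal) (hv : (0:ℝ) < v) {c : ℝ} (hc : 0 < c)
    (A : Matrix (Fin n) (Fin p) ℝ) (hA : ‖A‖ ≤ c) :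
    ∫⁻ x : Fin n → ℝ,
        ENNReal.ofReal (max ((∑ j, ((Aᵀ).mulVec x j) ^ 2) - 2 * c ^ 2 * v * p) 0)
        ∂Measure.pi (fun _ => gaussianReal 0 v)
      ≤ ENNReal.ofReal (c ^ 2 * v * (8 * Real.exp (-(p : ℝ) / 8))) := by
  obtain ⟨w, horth, hwnorm, hid⟩ := my_decomp A hc.le hA
  set s : ℝ := (4 * c ^ 2 * (v:ℝ))⁻¹ with hs_def
  have hs : 0 < s := by positivity
  set B : ℝ := 2 * c ^ 2 * v * p with hB_def
  set K : ℝ := (s * Real.exp 1)⁻¹ * Real.exp (-(s * B)) with hK_def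
  have hK : 0 < K := by positivity
  -- pointwise bound
  have hpt : ∀ y : ℝ, max (y - B) 0 ≤ K * Real.exp (s * y) := by
    intro y
    have h1 : s * (y - B) ≤ Real.exp (s * (y - B) - 1) := by
      have := Real.add_one_le_exp (s * (y - B) - 1)
      linarith
    have h2 : y - B ≤ K * Real.exp (s * y) := by
      have hKe : K * Real.exp (s * y) = Real.exp (s * (y - B) - 1) / s := by
        rw [hK_def, show s * (y - B) - 1 = -(s * B) + s * y + -1 by ring,
          Real.exp_add, Real.exp_add, mul_inv, ← Real.exp_neg]
        ring
      rw [hKe, le_div_iff₀ hs]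
      calc (y - B) * s = s * (y - B) := by ring
        _ ≤ Real.exp (s * (y - B) - 1) := h1
    exact max_le h2 (by positivity)
  calc ∫⁻ x : Fin n → ℝ,
        ENNReal.ofReal (max ((∑ j, ((Aᵀ).mulVec x j) ^ 2) - B) 0)
        ∂Measure.pi (fun _ => gaussianReal 0 v)
      ≤ ∫⁻ x : Fin n → ℝ,
          ENNReal.ofReal (K * Real.exp (s * ∑ j, (∑ i, w j i * x i) ^ 2))
          ∂Measure.pi (fun _ => gaussianReal 0 v) := by
        refine lintegral_mono fun x => ENNReal.ofReal_le_ofReal ?_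
        rw [← hid x]
        exact hpt _
    _ = ENNReal.ofReal K * ∫⁻ x : Fin n → ℝ,
          ENNReal.ofReal (Real.exp (s * ∑ j, (∑ i, w j i * x i) ^ 2))
          ∂Measure.pi (fun _ => gaussianReal 0 v) := by
        rw [← lintegral_const_mul _ ?_]
        · congr 1 with x
          rw [← ENNReal.ofReal_mul hK.le]
        · refine Measurable.ennreal_ofReal (Real.measurable_exp.comp ?_)
          refine Measurable.const_mul ?_ s
          exact Finset.measurable_sum _ fun j _ =>
            (Finset.measurable_sum _ fun i _ =>
              (measurable_pi_apply i).const_mul _).pow_const 2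
    _ ≤ ENNReal.ofReal K * ENNReal.ofReal (Real.sqrt 2) ^ p := by
        refine mul_le_mul_right ?_ _
        exact my_mgf_bound v hv hc w horth hwnorm
    _ ≤ ENNReal.ofReal (c ^ 2 * v * (8 * Real.exp (-(p : ℝ) / 8))) := by
        rw [← ENNReal.ofReal_pow (Real.sqrt_nonneg 2), ← ENNReal.ofReal_mul hK.le]
        refine ENNReal.ofReal_le_ofReal ?_
        have hsB : s * B = (p : ℝ) / 2 := by
          rw [hs_def, hB_def]
          field_simp
          ring
        have hKval : K = (4 * c ^ 2 * v) * Real.exp (-1) * Real.exp (-(p:ℝ)/2) := by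
          rw [hK_def, hsB, hs_def, mul_inv, inv_inv, ← Real.exp_neg,
            show -((p:ℝ)/2) = -(p:ℝ)/2 from (neg_div _ _).symm]
          try ring
        rw [hKval, mul_assoc]
        calc (4 * c ^ 2 * v) * Real.exp (-1) * (Real.exp (-(p:ℝ)/2) * Real.sqrt 2 ^ p)
            = (4 * c ^ 2 * v) * Real.exp (-1) * Real.exp (-(p:ℝ)/2) * Real.sqrt 2 ^ p := by
              ring
          _ ≤ c ^ 2 * v * (8 * Real.exp (-(p : ℝ) / 8)) := my_numeric p hc hv

/-- For `ε₂ ∼ N(0, τ² I_{N-p})` and a finite family `T` of `(N-p) × p` matrices, each of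
rank at most `min(k, p)` and operator norm at most `c`,
`E[max_{A ∈ T} ‖Aᵀ ε₂‖²] ≤ 2 c² τ² p + c² τ² |T| · 8 e^{-p/8}`. -/
theorem expected_max_gram_gaussian_le (r p k : ℕ) (hp : 0 < p)
    (τ : NNReal) (c : ℝ) (hc : 0 ≤ c)
    (T : Finset (Matrix (Fin r) (Fin p) ℝ)) (hT : T.Nonempty)
    (hrank : ∀ A ∈ T, A.rank ≤ min k p) (hnorm : ∀ A ∈ T, ‖A‖ ≤ c) :
    ∫ ε, (T.sup' hT fun A => ∑ i, ((Aᵀ).mulVec ε i) ^ 2)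
        ∂(Measure.pi fun _ : Fin r => gaussianReal 0 (τ ^ 2)) ≤
      2 * c ^ 2 * (τ : ℝ) ^ 2 * p +
        c ^ 2 * (τ : ℝ) ^ 2 * T.card * (8 * Real.exp (-(p : ℝ) / 8)) := by
  classical
  set μ := Measure.pi fun _ : Fin r => gaussianReal 0 (τ ^ 2) with hμ
  have hRHS : 0 ≤ 2 * c ^ 2 * (τ : ℝ) ^ 2 * p +
      c ^ 2 * (τ : ℝ) ^ 2 * T.card * (8 * Real.exp (-(p : ℝ) / 8)) := by positivity
  -- the sup' is nonnegative pointwise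
  have hF0 : ∀ (A : Matrix (Fin r) (Fin p) ℝ) (x : Fin r → ℝ),
      0 ≤ ∑ i, ((Aᵀ).mulVec x i) ^ 2 := fun A x => Finset.sum_nonneg fun i _ => sq_nonneg _
  have hS0 : ∀ x : Fin r → ℝ, 0 ≤ T.sup' hT fun A => ∑ i, ((Aᵀ).mulVec x i) ^ 2 := by
    intro x
    obtain ⟨A₀, hA₀⟩ := hT
    exact le_trans (hF0 A₀ x) (Finset.le_sup' (fun A => ∑ i, ((Aᵀ).mulVec x i) ^ 2) hA₀)
  rcases eq_or_lt_of_le hc with hc0 | hcpos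
  · -- c = 0 : all matrices are zero
    have hz : ∀ x : Fin r → ℝ, (T.sup' hT fun A => ∑ i, ((Aᵀ).mulVec x i) ^ 2) = 0 := by
      intro x
      refine le_antisymm (Finset.sup'_le _ _ fun A hA => ?_) (hS0 x)
      have hA0 : A = 0 := by
        have := hnorm A hA
        rw [← hc0] at this
        exact norm_le_zero_iff.1 this
      rw [hA0]
      simp [Matrix.mulVec_zero]
    calc ∫ x, (T.sup' hT fun A => ∑ i, ((Aᵀ).mulVec x i) ^ 2) ∂μ
        = ∫ _x, (0:ℝ) ∂μ := by exact integral_congr_ae (Filter.Eventually.of_forall hz)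
      _ ≤ _ := by rw [integral_zero]; exact hRHS
  rcases eq_or_ne τ 0 with hτ0 | hτ0
  · -- τ = 0 : degenerate measure concentrated at 0
    have hae : ∀ᵐ x ∂μ, x = (0 : Fin r → ℝ) := by
      have hnull : ∀ i : Fin r, μ {x : Fin r → ℝ | x i ≠ 0} = 0 := by
        intro i
        have heq : {x : Fin r → ℝ | x i ≠ 0} = Function.eval i ⁻¹' (({(0:ℝ)} : Set ℝ)ᶜ) := rfl
        rw [hμ, heq]
        refine Measure.pi_eval_preimage_null _ ?_
        rw [hτ0]
        simp [gaussianReal_zero_var, Measure.dirac_apply']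
      have hsub : {x : Fin r → ℝ | x ≠ 0} ⊆ ⋃ i, {x : Fin r → ℝ | x i ≠ 0} := by
        intro x hx
        by_contra hco
        simp only [Set.mem_iUnion, Set.mem_setOf_eq, not_exists, not_not] at hco
        exact hx (funext hco)
      have : μ {x : Fin r → ℝ | x ≠ 0} = 0 :=
        measure_mono_null hsub (measure_iUnion_null hnull)
      rw [ae_iff]
      exact this
    have hz : ∀ᵐ x ∂μ, (T.sup' hT fun A => ∑ i, ((Aᵀ).mulVec x i) ^ 2) = 0 := by
      filter_upwards [hae] with x hx
      rw [hx]
      refine le_antisymm (Finset.sup'_le _ _ fun A hA => ?_) (hS0 0)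
      simp [Matrix.mulVec_zero]
    calc ∫ x, (T.sup' hT fun A => ∑ i, ((Aᵀ).mulVec x i) ^ 2) ∂μ
        = ∫ _x, (0:ℝ) ∂μ := integral_congr_ae hz
      _ ≤ _ := by rw [integral_zero]; exact hRHS
  -- main case
  have hv : (0:ℝ) < ((τ ^ 2 : NNReal) : ℝ) := by
    have : (0:ℝ) < (τ:ℝ) := lt_of_le_of_ne τ.2 (by exact_mod_cast (Ne.symm hτ0))
    push_cast
    positivity
  set v : NNReal := τ ^ 2 with hv_def
  set B : ℝ := 2 * c ^ 2 * (v:ℝ) * p with hB_def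
  set F : Matrix (Fin r) (Fin p) ℝ → (Fin r → ℝ) → ℝ :=
    fun A x => ∑ i, ((Aᵀ).mulVec x i) ^ 2 with hF_def
  have hFmeas : ∀ A, Measurable (F A) := by
    intro A
    have : F A = fun x => ∑ j, (∑ i, Aᵀ j i * x i) ^ 2 := by
      funext x
      exact Finset.sum_congr rfl fun j _ => by rw [Matrix.mulVec, dotProduct]
    rw [this]
    exact Finset.measurable_sum _ fun j _ =>
      (Finset.measurable_sum _ fun i _ => (measurable_pi_apply i).const_mul _).pow_const 2
  have hint : ∀ A ∈ T, Integrable (fun x => max (F A x - B) 0) μ := by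
    intro A hA
    have hmeas : Measurable fun x => max (F A x - B) 0 :=
      ((hFmeas A).sub measurable_const).max measurable_const
    refine ⟨hmeas.aestronglyMeasurable, ?_⟩
    refine (hasFiniteIntegral_iff_ofReal
      (Filter.Eventually.of_forall fun x => le_max_right _ _)).2 ?_
    calc ∫⁻ x, ENNReal.ofReal (max (F A x - B) 0) ∂μ
        ≤ ENNReal.ofReal (c ^ 2 * v * (8 * Real.exp (-(p : ℝ) / 8))) :=
          my_perA v hv hcpos A (hnorm A hA)
      _ < ⊤ := ENNReal.ofReal_lt_top
  have hgint : Integrable (fun x => B + ∑ A ∈ T, max (F A x - B) 0) μ :=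
    (integrable_const B).add (integrable_finset_sum T hint)
  have hle : ∀ x, (T.sup' hT fun A => ∑ i, ((Aᵀ).mulVec x i) ^ 2)
      ≤ B + ∑ A ∈ T, max (F A x - B) 0 := by
    intro x
    obtain ⟨A₀, hA₀, hS⟩ := Finset.exists_mem_eq_sup' hT fun A => ∑ i, ((Aᵀ).mulVec x i) ^ 2
    rw [hS]
    have h1 : F A₀ x ≤ B + max (F A₀ x - B) 0 := by
      rcases le_or_gt (F A₀ x) B with h | h
      · rw [max_eq_right (by linarith)]; linarith
      · rw [max_eq_left (by linarith)]; linarith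
    refine le_trans h1 ?_
    have h2 : max (F A₀ x - B) 0 ≤ ∑ A ∈ T, max (F A x - B) 0 :=
      Finset.single_le_sum (f := fun A => max (F A x - B) 0)
        (fun A _ => le_max_right _ _) hA₀
    linarith
  have hper : ∀ A ∈ T, ∫ x, max (F A x - B) 0 ∂μ
      ≤ c ^ 2 * (v:ℝ) * (8 * Real.exp (-(p : ℝ) / 8)) := by
    intro A hA
    have heq := integral_eq_lintegral_of_nonneg_ae (μ := μ)
      (f := fun x => max (F A x - B) 0)
      (Filter.Eventually.of_forall fun x => le_max_right _ _)
      (((hFmeas A).sub measurable_const).max measurable_const).aestronglyMeasurable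
    rw [heq]
    have hb := my_perA v hv hcpos A (hnorm A hA)
    calc (∫⁻ x, ENNReal.ofReal (max (F A x - B) 0) ∂μ).toReal
        ≤ (ENNReal.ofReal (c ^ 2 * v * (8 * Real.exp (-(p : ℝ) / 8)))).toReal :=
          ENNReal.toReal_mono ENNReal.ofReal_ne_top hb
      _ = c ^ 2 * (v:ℝ) * (8 * Real.exp (-(p : ℝ) / 8)) :=
          ENNReal.toReal_ofReal (by positivity)
  haveI : IsProbabilityMeasure μ := by
    rw [hμ]; infer_instance
  calc ∫ x, (T.sup' hT fun A => ∑ i, ((Aᵀ).mulVec x i) ^ 2) ∂μ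
      ≤ ∫ x, (B + ∑ A ∈ T, max (F A x - B) 0) ∂μ :=
        integral_mono_of_nonneg (Filter.Eventually.of_forall hS0) hgint
          (Filter.Eventually.of_forall hle)
    _ = B + ∑ A ∈ T, ∫ x, max (F A x - B) 0 ∂μ := by
        rw [integral_add (integrable_const B) (integrable_finset_sum T hint),
          integral_const, integral_finset_sum T hint]
        simp
    _ ≤ B + ∑ _A ∈ T, c ^ 2 * (v:ℝ) * (8 * Real.exp (-(p : ℝ) / 8)) := by
        refine add_le_add_right (Finset.sum_le_sum hper) _
    _ = 2 * c ^ 2 * (τ : ℝ) ^ 2 * p +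
        c ^ 2 * (τ : ℝ) ^ 2 * T.card * (8 * Real.exp (-(p : ℝ) / 8)) := by
        rw [Finset.sum_const, hB_def, hv_def]
        push_cast
        ring
end
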